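/- For every integer n ≥ 3, the total number of rises over all compositions of n with parts in ℕ⁺ (all positive integers allowed as parts) satisfies 9 · ∑_{σ∈C_n^{ℕ⁺}} rises(σ) = 2^{n−2}·(3n−5) + (−1)^{n+1}, as an identity of integers. -/
import Mathlib


/-- Number of rises of a list (adjacent pairs with strict increase). -/
def risesL (l : List ℕ) : ℕ := (l.zip l.tail).countP (fun p => decide (p.1 < p.2))

/-! ### Auxiliary definitions -/

/-- Increment the head of a list. -/
def incL : List ℕ → List ℕ
  | [] => []
  | a :: t => (a + 1) :: t

/-- Enumeration of all compositions of `n`. -/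
def comps : ℕ → List (List ℕ)
  | 0 => [[]]
  | 1 => [[1]]
  | (n + 2) => ((comps (n + 1)).map (fun l => 1 :: l)) ++ ((comps (n + 1)).map incL)

def hdk (k : ℕ) (l : List ℕ) : Bool := match l with | a :: _ => a == k | _ => false
def sck (k : ℕ) (l : List ℕ) : Bool :=
  match l with | a :: b :: _ => b == a + k | _ => false
def ge2 (l : List ℕ) : Bool := match l with | a :: _ => decide (2 ≤ a) | _ => false

def Hc (k n : ℕ) : ℕ := (comps n).countP (hdk k)
def Wc (k n : ℕ) : ℕ := (comps n).countP (sck k)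
def Bc (n : ℕ) : ℕ := (comps n).countP ge2
def R (n : ℕ) : ℕ := ((comps n).map risesL).sum

/-! ### Basic facts about `comps` -/

lemma comps_spec : ∀ n, ∀ l ∈ comps n, l.sum = n ∧ ∀ x ∈ l, 0 < x := by
  intro n
  induction n using Nat.strong_induction_on with
  | _ n ih =>
    match n with
    | 0 => intro l hl; simp [comps] at hl; simp [hl]
    | 1 => intro l hl; simp [comps] at hl; simp [hl]
    | (n + 2) =>
      intro l hl
      simp only [comps, List.mem_append, List.mem_map] at hl
      rcases hl with ⟨c, hc, rfl⟩ | ⟨c, hc, rfl⟩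
      · obtain ⟨h1, h2⟩ := ih (n + 1) (by omega) c hc
        constructor
        · simp [h1]; omega
        · intro x hx; rcases List.mem_cons.1 hx with rfl | hx
          · norm_num
          · exact h2 x hx
      · obtain ⟨h1, h2⟩ := ih (n + 1) (by omega) c hc
        cases c with
        | nil => simp at h1
        | cons a t =>
          constructor
          · simp [incL]; simp at h1; omega
          · intro x hx
            simp only [incL, List.mem_cons] at hx
            rcases hx with rfl | hx
            · omega
            · exact h2 x (List.mem_cons.2 (Or.inr hx))

lemma mem_comps : ∀ n, ∀ l : List ℕ, l.sum = n → (∀ x ∈ l, 0 < x) → l ∈ comps n := by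
  intro n
  induction n using Nat.strong_induction_on with
  | _ n ih =>
    match n with
    | 0 =>
      intro l hs hp
      cases l with
      | nil => simp [comps]
      | cons a t =>
        exfalso
        have := hp a (by simp)
        simp at hs; omega
    | 1 =>
      intro l hs hp
      cases l with
      | nil => simp at hs
      | cons a t =>
        have ha := hp a (by simp)
        simp at hs
        have ht : t.sum = 0 := by omega
        have : a = 1 := by omega
        subst this
        cases t with
        | nil => simp [comps]
        | cons b u =>
          exfalso
          have := hp b (by simp)
          simp at ht; omega
    | (n + 2) =>
      intro l hs hp
      cases l with
      | nil => simp at hs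
      | cons a t =>
        have ha := hp a (by simp)
        simp at hs
        simp only [comps, List.mem_append, List.mem_map]
        rcases Nat.lt_or_ge a 2 with h2 | h2
        · -- a = 1
          have : a = 1 := by omega
          subst this
          left
          exact ⟨t, ih (n + 1) (by omega) t (by omega)
            (fun x hx => hp x (List.mem_cons.2 (Or.inr hx))), rfl⟩
        · right
          refine ⟨(a - 1) :: t, ih (n + 1) (by omega) ((a - 1) :: t) (by simp; omega) ?_, ?_⟩
          · intro x hx
            rcases List.mem_cons.1 hx with rfl | hx
            · omega
            · exact hp x (List.mem_cons.2 (Or.inr hx))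
          · simp [incL]; omega

lemma comps_ne_nil {n : ℕ} {l : List ℕ} (hl : l ∈ comps (n + 1)) : l ≠ [] := by
  intro h
  have := (comps_spec (n + 1) l hl).1
  subst h; simp at this

lemma comps_head {n : ℕ} {l : List ℕ} (hl : l ∈ comps (n + 1)) :
    ∃ a t, l = a :: t ∧ 1 ≤ a := by
  cases l with
  | nil => exact absurd rfl (comps_ne_nil hl)
  | cons a t => exact ⟨a, t, rfl, (comps_spec (n + 1) _ hl).2 a (by simp)⟩

lemma length_comps : ∀ n, (comps (n + 1)).length = 2 ^ n := by
  intro n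
  induction n with
  | zero => simp [comps]
  | succ m ih =>
    show (comps (m + 2)).length = 2 ^ (m + 1)
    simp [comps, ih]; ring

lemma incL_injective : Function.Injective incL := by
  intro l1 l2 h
  cases l1 with
  | nil => cases l2 with
    | nil => rfl
    | cons b u => simp [incL] at h
  | cons a t => cases l2 with
    | nil => simp [incL] at h
    | cons b u => simp [incL] at h; simp [h.1, h.2]

lemma comps_nodup : ∀ n, (comps n).Nodup := by
  intro n
  induction n using Nat.strong_induction_on with
  | _ n ih =>
    match n with
    | 0 => simp [comps]
    | 1 => simp [comps]
    | (n + 2) =>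
      have hnd := ih (n + 1) (by omega)
      simp only [comps]
      refine List.Nodup.append (hnd.map ?_) (hnd.map incL_injective) ?_
      · intro l1 l2 h; simpa using h
      · intro x hx hy
        simp only [List.mem_map] at hx hy
        obtain ⟨c, hc, rfl⟩ := hx
        obtain ⟨d, hd, he⟩ := hy
        obtain ⟨a, t, rfl, ha⟩ := comps_head hd
        simp [incL] at he
        omega

/-! ### Small sum lemmas -/

lemma sum_map_add {α : Type*} (L : List α) (f g : α → ℕ) :
    (L.map (fun c => f c + g c)).sum = (L.map f).sum + (L.map g).sum := by
  induction L with
  | nil => simp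
  | cons a t ih => simp [ih]; omega

lemma sum_map_ite {α : Type*} (L : List α) (p : α → Bool) :
    (L.map (fun c => if p c then 1 else 0)).sum = L.countP p := by
  induction L with
  | nil => simp
  | cons a t ih => simp [List.countP_cons, ih]; omega

/-! ### rises lemmas -/

lemma risesL_cons₂ (a b : ℕ) (t : List ℕ) :
    risesL (a :: b :: t) = (if a < b then 1 else 0) + risesL (b :: t) := by
  simp [risesL, List.countP_cons]
  split <;> omega

lemma risesL_one_cons (c : List ℕ) :
    risesL (1 :: c) = risesL c + (if ge2 c then 1 else 0) := by
  cases c with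
  | nil => simp [risesL, ge2]
  | cons a t =>
    rw [risesL_cons₂]
    simp only [ge2, decide_eq_true_eq]
    split <;> split <;> omega

lemma risesL_incL (c : List ℕ) :
    risesL (incL c) + (if sck 1 c then 1 else 0) = risesL c := by
  match c with
  | [] => simp [incL, sck]
  | [a] => simp [incL, sck, risesL]
  | (a :: b :: t) =>
    simp only [incL, sck]
    rw [risesL_cons₂, risesL_cons₂]
    simp only [beq_iff_eq]
    split <;> split <;> split <;> omega

/-! ### Count recurrences and closed forms -/

lemma Bc_rec (n : ℕ) : Bc (n + 2) = 2 ^ n := by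
  unfold Bc
  simp only [comps, List.countP_append, List.countP_map]
  have h1 : (comps (n + 1)).countP (ge2 ∘ (fun l => 1 :: l)) = 0 := by
    apply List.countP_eq_zero.2
    intro c _; simp [ge2]
  have h2 : (comps (n + 1)).countP (ge2 ∘ incL) = (comps (n + 1)).length := by
    apply List.countP_eq_length.2
    intro c hc
    obtain ⟨a, t, rfl, ha⟩ := comps_head hc
    simp [incL, ge2]; omega
  rw [h1, h2, length_comps]; omega

lemma Hc_one_rec (n : ℕ) : Hc 1 (n + 2) = 2 ^ n := by
  unfold Hc
  simp only [comps, List.countP_append, List.countP_map]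
  have h1 : (comps (n + 1)).countP (hdk 1 ∘ (fun l => 1 :: l)) = (comps (n + 1)).length := by
    apply List.countP_eq_length.2
    intro c _; simp [hdk]
  have h2 : (comps (n + 1)).countP (hdk 1 ∘ incL) = 0 := by
    apply List.countP_eq_zero.2
    intro c hc
    obtain ⟨a, t, rfl, ha⟩ := comps_head hc
    simp [incL, hdk]; omega
  rw [h1, h2, length_comps]; omega

lemma Hc_succ_rec (k n : ℕ) (hk : 1 ≤ k) : Hc (k + 1) (n + 2) = Hc k (n + 1) := by
  unfold Hc
  simp only [comps, List.countP_append, List.countP_map]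
  have h1 : (comps (n + 1)).countP (hdk (k + 1) ∘ (fun l => 1 :: l)) = 0 := by
    apply List.countP_eq_zero.2
    intro c _; simp [hdk]; omega
  have h2 : (comps (n + 1)).countP (hdk (k + 1) ∘ incL) = (comps (n + 1)).countP (hdk k) := by
    apply List.countP_congr
    intro c _
    cases c with
    | nil => simp [incL, hdk]
    | cons a t => simp [incL, hdk]
  rw [h1, h2]; omega

lemma Hc_lt : ∀ n k, n < k → Hc k n = 0 := by
  intro n
  induction n using Nat.strong_induction_on with
  | _ n ih =>
    match n with
    | 0 => intro k hk; simp [Hc, comps, hdk]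
    | 1 =>
      intro k hk
      have : (1 == k) = false := by simp; omega
      simp [Hc, comps, List.countP_cons, hdk, this]
    | (n + 2) =>
      intro k hk
      obtain ⟨k', rfl⟩ : ∃ k', k = k' + 1 := ⟨k - 1, by omega⟩
      rw [Hc_succ_rec k' n (by omega)]
      exact ih (n + 1) (by omega) k' (by omega)

lemma Hc_eq : ∀ k, 1 ≤ k → Hc k k = 1 := by
  intro k
  induction k using Nat.strong_induction_on with
  | _ k ih =>
    match k with
    | 0 => intro h; omega
    | 1 => intro _; simp [Hc, comps, List.countP_cons, hdk]
    | (k + 2) =>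
      intro _
      rw [show Hc (k + 2) (k + 2) = Hc (k + 1 + 1) (k + 2) from rfl,
        Hc_succ_rec (k + 1) k (by omega)]
      exact ih (k + 1) (by omega) (by omega)

lemma Hc_ge : ∀ k, 1 ≤ k → ∀ j, Hc k (k + j + 1) = 2 ^ j := by
  intro k
  induction k using Nat.strong_induction_on with
  | _ k ih =>
    match k with
    | 0 => intro h; omega
    | 1 =>
      intro _ j
      rw [show 1 + j + 1 = j + 2 by omega, Hc_one_rec]
    | (k + 2) =>
      intro _ j
      rw [show k + 2 + j + 1 = (k + j + 1) + 2 by omega,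
        Hc_succ_rec (k + 1) (k + j + 1) (by omega),
        show k + j + 1 + 1 = (k + 1) + j + 1 by omega]
      exact ih (k + 1) (by omega) (by omega) j

lemma Wc_rec (k n : ℕ) : Wc k (n + 2) = Hc (k + 1) (n + 1) + Wc (k + 1) (n + 1) := by
  unfold Wc Hc
  simp only [comps, List.countP_append, List.countP_map]
  have h1 : (comps (n + 1)).countP (sck k ∘ (fun l => 1 :: l))
      = (comps (n + 1)).countP (hdk (k + 1)) := by
    apply List.countP_congr
    intro c _
    cases c with
    | nil => simp [sck, hdk]
    | cons a t => simp [sck, hdk]; omega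
  have h2 : (comps (n + 1)).countP (sck k ∘ incL) = (comps (n + 1)).countP (sck (k + 1)) := by
    apply List.countP_congr
    intro c _
    match c with
    | [] => simp [incL, sck]
    | [a] => simp [incL, sck]
    | (a :: b :: t) => simp [incL, sck]; omega
  rw [h1, h2]

lemma Wc_small (k n : ℕ) (hk : 1 ≤ k) (hn : n < k + 2) : Wc k n = 0 := by
  unfold Wc
  apply List.countP_eq_zero.2
  intro l hl hsck
  obtain ⟨hs, hp⟩ := comps_spec n l hl
  cases l with
  | nil => simp [sck] at hsck
  | cons a t =>
    cases t with
    | nil => simp [sck] at hsck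
    | cons b u =>
      simp [sck] at hsck
      have ha := hp a (by simp)
      simp at hs
      omega

lemma Wc_closed : ∀ n k, 1 ≤ k →
    3 * (Wc k n : ℤ) = if k + 2 ≤ n then 2 ^ (n - k - 1) + (-1 : ℤ) ^ (n - k) else 0 := by
  intro n
  induction n using Nat.strong_induction_on with
  | _ n ih =>
    match n with
    | 0 => intro k hk; rw [Wc_small k 0 hk (by omega), if_neg (by omega)]; simp
    | 1 => intro k hk; rw [Wc_small k 1 hk (by omega), if_neg (by omega)]; simp
    | (n + 2) =>
      intro k hk
      rw [Wc_rec]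
      rcases Nat.lt_or_ge n k with h | h
      · -- k > n : everything vanishes
        rw [Hc_lt (n + 1) (k + 1) (by omega), Wc_small (k + 1) (n + 1) (by omega) (by omega),
          if_neg (by omega)]
        simp
      · rcases Nat.eq_or_lt_of_le h with rfl | h2
        · -- k = n
          rw [Hc_eq (k + 1) (by omega), Wc_small (k + 1) (k + 1) (by omega) (by omega),
            if_pos (by omega), show k + 2 - k - 1 = 1 by omega, show k + 2 - k = 2 by omega]
          norm_num
        · rcases Nat.eq_or_lt_of_le h2 with h3 | h3
          · -- k + 1 = n
            subst h3
            rw [show k.succ + 1 = (k + 1) + 0 + 1 by omega, Hc_ge (k + 1) (by omega) 0,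
              Wc_small (k + 1) ((k + 1) + 0 + 1) (by omega) (by omega),
              if_pos (by omega), show k.succ + 2 - k - 1 = 2 by omega,
              show k.succ + 2 - k = 3 by omega]
            norm_num
          · -- k + 2 ≤ n
            obtain ⟨j, rfl⟩ : ∃ j, n = k + j + 2 := ⟨n - k - 2, by omega⟩
            rw [show k + j + 2 + 1 = (k + 1) + (j + 1) + 1 by omega,
              Hc_ge (k + 1) (by omega) (j + 1)]
            have hW := ih (k + j + 2 + 1) (by omega) (k + 1) (by omega)
            rw [show k + j + 2 + 1 = (k + 1) + (j + 1) + 1 by omega] at hW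
            rw [if_pos (by omega), show (k+1) + (j+1) + 1 - (k+1) - 1 = j + 1 by omega,
              show (k+1) + (j+1) + 1 - (k+1) = j + 2 by omega] at hW
            rw [if_pos (by omega), show k + j + 2 + 2 - k - 1 = j + 3 by omega,
              show k + j + 2 + 2 - k = j + 4 by omega]
            push_cast
            push_cast at hW
            linear_combination hW

/-! ### Recurrence for the total number of rises -/

lemma R_rec (n : ℕ) : R (n + 2) + Wc 1 (n + 1) = 2 * R (n + 1) + Bc (n + 1) := by
  unfold R Wc Bc
  simp only [comps, List.map_append, List.map_map, List.sum_append]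
  have h1 : ((comps (n + 1)).map (risesL ∘ (fun l => 1 :: l))).sum
      = ((comps (n + 1)).map risesL).sum + (comps (n + 1)).countP ge2 := by
    have : (risesL ∘ (fun l : List ℕ => 1 :: l))
        = fun c => risesL c + (if ge2 c then 1 else 0) := by
      funext c; exact risesL_one_cons c
    rw [this, sum_map_add, sum_map_ite]
  have h2 : ((comps (n + 1)).map (risesL ∘ incL)).sum + (comps (n + 1)).countP (sck 1)
      = ((comps (n + 1)).map risesL).sum := by
    rw [← sum_map_ite (comps (n + 1)) (sck 1), ← sum_map_add]
    congr 1
    apply List.map_congr_left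
    intro c _
    exact risesL_incL c
  omega

/-! ### Bridge to `Composition` -/

lemma sum_comp_eq (n : ℕ) (f : List ℕ → ℕ) :
    ∑ c : Composition n, f c.blocks = ((comps n).map f).sum := by
  rw [← List.sum_toFinset f (comps_nodup n)]
  apply Finset.sum_bij (fun (c : Composition n) _ => c.blocks)
  · intro c _
    rw [List.mem_toFinset]
    exact mem_comps n c.blocks c.blocks_sum (fun x hx => c.blocks_pos hx)
  · intro c1 _ c2 _ h
    exact Composition.ext h
  · intro l hl
    rw [List.mem_toFinset] at hl
    obtain ⟨hs, hp⟩ := comps_spec n l hl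
    exact ⟨⟨l, fun {x} hx => hp x hx, hs⟩, Finset.mem_univ _, rfl⟩
  · intro c _; rfl

lemma R_closed : ∀ n, 3 ≤ n →
    9 * (R n : ℤ) = 2 ^ (n - 2) * (3 * (n : ℤ) - 5) + (-1) ^ (n + 1) := by
  intro n hn
  induction n, hn using Nat.le_induction with
  | base =>
    have : R 3 = 1 := by decide
    rw [this]; norm_num
  | succ n hn ih =>
    obtain ⟨m, hm, rfl⟩ : ∃ m, 1 ≤ m ∧ n = m + 2 := ⟨n - 2, by omega, by omega⟩
    have hrec := R_rec (m + 1)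
    have hrec' : (R (m + 3) : ℤ) + (Wc 1 (m + 2) : ℤ)
        = 2 * (R (m + 2) : ℤ) + (Bc (m + 2) : ℤ) := by exact_mod_cast hrec
    have hB : (Bc (m + 2) : ℤ) = 2 ^ m := by rw [Bc_rec]; push_cast; ring
    have hW := Wc_closed (m + 2) 1 (by omega)
    rw [if_pos (by omega), show m + 2 - 1 - 1 = m by omega,
      show m + 2 - 1 = m + 1 by omega] at hW
    rw [show m + 2 - 2 = m by omega] at ih
    rw [show m + 2 + 1 - 2 = m + 1 by omega]
    push_cast
    push_cast at ih
    simp only [pow_succ] at *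
    linear_combination 9 * hrec' + 2 * ih - 3 * hW + 9 * hB

theorem stmt6 (n : ℕ) (hn : 3 ≤ n) :
    (9 : ℤ) * ∑ c : Composition n, (risesL c.blocks : ℤ)
      = 2 ^ (n - 2) * (3 * (n : ℤ) - 5) + (-1) ^ (n + 1) := by
  have : ∑ c : Composition n, (risesL c.blocks : ℤ)
      = ((∑ c : Composition n, risesL c.blocks : ℕ) : ℤ) := by push_cast; rfl
  rw [this, sum_comp_eq n risesL]
  exact R_closed n hn
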